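/- Let x_1,…,x_m ∈ ℝ^d satisfy max_i ‖x_i‖ ≤ 1 and be separable with margin γ ∈ (0,1], let ℓ be a convex, differentiable, monotonically decreasing loss admitting an inverse ℓ⁻¹ on (0, ℓ(0)], whose derivative ℓ' is μ-Lipschitz, and consider gradient descent iterates w_1 = 0, w_{t+1} = w_t − η_t∇L̂(w_t) with step sizes 0 < η_t ≤ 1/μ. Fix an index T ≥ 1 and let w* be any vector with L̂(w*) ≤ L̂(w_T). Then max_{t ∈ {1,…,T}} ‖w_t‖ ≤ 2‖w*‖. -/

import Mathlib

open scoped RealInnerProductSpace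

/-- Tangent line of a convex differentiable function lies below the graph. -/
lemma aux_tangent_le {ℓ ℓ' : ℝ → ℝ} (hconv : ConvexOn ℝ Set.univ ℓ)
    (hderiv : ∀ z, HasDerivAt ℓ (ℓ' z) z) (a b : ℝ) :
    ℓ a + ℓ' a * (b - a) ≤ ℓ b := by
  rcases lt_trichotomy a b with h | h | h
  · have hs := hconv.le_slope_of_hasDerivAt (Set.mem_univ a) (Set.mem_univ b) h (hderiv a)
    rw [slope_def_field] at hs
    have hba : 0 < b - a := sub_pos.2 h
    rw [le_div_iff₀ hba] at hs
    linarith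
  · simp [h]
  · have hs := hconv.slope_le_of_hasDerivAt (Set.mem_univ b) (Set.mem_univ a) h (hderiv a)
    rw [slope_def_field] at hs
    have hba : 0 < a - b := sub_pos.2 h
    rw [div_le_iff₀ hba] at hs
    linarith

/-- Quadratic upper bound from a Lipschitz derivative. -/
lemma aux_smooth_upper {ℓ ℓ' : ℝ → ℝ} {μ : ℝ}
    (hderiv : ∀ z, HasDerivAt ℓ (ℓ' z) z) (hμ : 0 < μ)
    (hlip : ∀ a b : ℝ, |ℓ' a - ℓ' b| ≤ μ * |a - b|) (a b : ℝ) :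
    ℓ b ≤ ℓ a + ℓ' a * (b - a) + μ / 2 * (b - a) ^ 2 := by
  set c : ℝ := b - a with hc
  set φ : ℝ → ℝ := fun t => ℓ (a + t * c) - t * (ℓ' a * c) - μ / 2 * t ^ 2 * c ^ 2 with hφ
  have hφd : ∀ t : ℝ, HasDerivAt φ (ℓ' (a + t * c) * c - ℓ' a * c - μ * t * c ^ 2) t := by
    intro t
    have h1 : HasDerivAt (fun t : ℝ => a + t * c) c t := by
      simpa using ((hasDerivAt_id t).mul_const c).const_add a
    have h2 : HasDerivAt (fun t : ℝ => ℓ (a + t * c)) (ℓ' (a + t * c) * c) t :=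
      (hderiv _).comp t h1
    have h3 : HasDerivAt (fun t : ℝ => t * (ℓ' a * c)) (ℓ' a * c) t := by
      simpa using (hasDerivAt_id t).mul_const (ℓ' a * c)
    have h4 : HasDerivAt (fun t : ℝ => μ / 2 * t ^ 2 * c ^ 2) (μ * t * c ^ 2) t := by
      have h5 : HasDerivAt (fun t : ℝ => t ^ 2) (2 * t) t := by
        simpa using hasDerivAt_pow 2 t
      have := (h5.const_mul (μ / 2)).mul_const (c ^ 2)
      rw [show μ * t * c ^ 2 = μ / 2 * (2 * t) * c ^ 2 by ring]
      exact this
    exact (h2.sub h3).sub h4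
  have anti : AntitoneOn φ (Set.Icc (0:ℝ) 1) := by
    apply antitoneOn_of_deriv_nonpos (convex_Icc 0 1)
    · exact fun t _ => (hφd t).continuousAt.continuousWithinAt
    · intro t _
      exact ((hφd t).differentiableAt).differentiableWithinAt
    · intro t ht
      rw [interior_Icc] at ht
      rw [(hφd t).deriv]
      have hl : |ℓ' (a + t * c) - ℓ' a| ≤ μ * |t * c| := by
        simpa using hlip (a + t * c) a
      have h5 : (ℓ' (a + t * c) - ℓ' a) * c ≤ μ * t * c ^ 2 := by
        calc (ℓ' (a + t * c) - ℓ' a) * c ≤ |(ℓ' (a + t * c) - ℓ' a) * c| := le_abs_self _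
        _ = |ℓ' (a + t * c) - ℓ' a| * |c| := abs_mul _ _
        _ ≤ μ * |t * c| * |c| := by
            apply mul_le_mul_of_nonneg_right hl (abs_nonneg c)
        _ = μ * t * (|c| * |c|) := by
            rw [abs_mul, abs_of_pos ht.1]; ring
        _ = μ * t * c ^ 2 := by
            rw [abs_mul_abs_self]; ring
      linarith
  have h10 := anti (Set.left_mem_Icc.2 zero_le_one) (Set.right_mem_Icc.2 zero_le_one) zero_le_one
  have hφ1 : φ 1 = ℓ b - ℓ' a * c - μ / 2 * c ^ 2 := by
    simp only [hφ]
    rw [show a + 1 * c = b by rw [hc]; ring]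
    ring
  have hφ0 : φ 0 = ℓ a := by simp only [hφ]; norm_num
  rw [hφ1, hφ0] at h10
  linarith

/-- Gradient of the empirical risk. -/
lemma aux_hasGradient {d m : ℕ} (x : Fin m → EuclideanSpace ℝ (Fin d))
    (ℓ ℓ' : ℝ → ℝ) (hderiv : ∀ z, HasDerivAt ℓ (ℓ' z) z) (v : EuclideanSpace ℝ (Fin d)) :
    HasGradientAt (fun u => (1 / (m:ℝ)) * ∑ i, ℓ ⟪x i, u⟫)
      ((1 / (m:ℝ)) • ∑ i, ℓ' ⟪x i, v⟫ • x i) v := by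
  rw [hasGradientAt_iff_hasFDerivAt]
  have hi : ∀ i : Fin m, HasFDerivAt (fun u : EuclideanSpace ℝ (Fin d) => ℓ ⟪x i, u⟫)
      (ℓ' ⟪x i, v⟫ • innerSL ℝ (x i)) v := by
    intro i
    exact (hderiv _).comp_hasFDerivAt v (innerSL ℝ (x i)).hasFDerivAt
  have hsum := HasFDerivAt.fun_sum (u := Finset.univ) (fun i _ => hi i)
  have hmul := hsum.const_mul ((1:ℝ) / m)
  refine hmul.congr_fderiv ?_
  ext u
  simp [InnerProductSpace.toDual_apply_apply, inner_smul_left, sum_inner, real_inner_smul_left]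

set_option maxHeartbeats 1000000 in
theorem stmt_6 {d m : ℕ} (hm : 0 < m)
    (x : Fin m → EuclideanSpace ℝ (Fin d)) (hx : ∀ i, ‖x i‖ ≤ 1)
    (γ : ℝ) (hγ : γ ∈ Set.Ioc (0 : ℝ) 1)
    (w₀ : EuclideanSpace ℝ (Fin d)) (hw₀ : ‖w₀‖ = 1)
    (hsep : ∀ i, γ ≤ ⟪x i, w₀⟫)
    (ℓ ℓ' : ℝ → ℝ) (hconv : ConvexOn ℝ Set.univ ℓ)
    (hderiv : ∀ z, HasDerivAt ℓ (ℓ' z) z)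
    (hanti : StrictAnti ℓ)
    (ℓinv : ℝ → ℝ) (hinv : ∀ z ∈ Set.Ioc (0 : ℝ) (ℓ 0), ℓ (ℓinv z) = z)
    (μ : ℝ) (hμ : 0 < μ) (hlip : ∀ a b : ℝ, |ℓ' a - ℓ' b| ≤ μ * |a - b|)
    (L : EuclideanSpace ℝ (Fin d) → ℝ)
    (hL : ∀ v, L v = (1 / m) * ∑ i, ℓ ⟪x i, v⟫)
    (η : ℕ → ℝ) (hη : ∀ t, 0 < η t ∧ η t ≤ 1 / μ)
    (w : ℕ → EuclideanSpace ℝ (Fin d)) (hw1 : w 1 = 0)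
    (hrec : ∀ t, 1 ≤ t → w (t + 1) = w t - η t • gradient L (w t))
    (T : ℕ) (hT : 1 ≤ T)
    (ws : EuclideanSpace ℝ (Fin d)) (hws : L ws ≤ L (w T)) :
    ∀ t, 1 ≤ t → t ≤ T → ‖w t‖ ≤ 2 * ‖ws‖ := by
  have hm' : (0:ℝ) < m := by exact_mod_cast hm
  set G : EuclideanSpace ℝ (Fin d) → EuclideanSpace ℝ (Fin d) :=
    fun v => (1 / (m:ℝ)) • ∑ i, ℓ' ⟪x i, v⟫ • x i with hG
  have hLfun : L = fun u => (1 / (m:ℝ)) * ∑ i, ℓ ⟪x i, u⟫ := funext hL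
  have hgrad : ∀ v, HasGradientAt L (G v) v := by
    intro v; rw [hLfun]; exact aux_hasGradient x ℓ ℓ' hderiv v
  have hgradL : ∀ v, gradient L v = G v := fun v => (hgrad v).gradient
  have hinnerG : ∀ v u, ⟪G v, u⟫ = (1 / (m:ℝ)) * ∑ i, ℓ' ⟪x i, v⟫ * ⟪x i, u⟫ := by
    intro v u
    simp [hG, inner_smul_left, sum_inner, real_inner_smul_left]
  -- first-order lower bound (convexity)
  have I1 : ∀ v u, L v + ⟪G v, u - v⟫ ≤ L u := by
    intro v u
    rw [hL u, hL v, hinnerG]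
    simp_rw [inner_sub_right]
    have key : ∑ i, (ℓ ⟪x i, v⟫ + ℓ' ⟪x i, v⟫ * (⟪x i, u⟫ - ⟪x i, v⟫)) ≤ ∑ i, ℓ ⟪x i, u⟫ :=
      Finset.sum_le_sum fun i _ => aux_tangent_le hconv hderiv _ _
    have hkey := mul_le_mul_of_nonneg_left key (by positivity : (0:ℝ) ≤ 1 / m)
    rw [Finset.sum_add_distrib, mul_add] at hkey
    linarith
  -- quadratic upper bound (smoothness)
  have I2 : ∀ v u, L u ≤ L v + ⟪G v, u - v⟫ + μ / 2 * ‖u - v‖ ^ 2 := by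
    intro v u
    rw [hL u, hL v, hinnerG]
    simp_rw [inner_sub_right]
    have key : ∀ i : Fin m, ℓ ⟪x i, u⟫ ≤
        ℓ ⟪x i, v⟫ + ℓ' ⟪x i, v⟫ * (⟪x i, u⟫ - ⟪x i, v⟫) + μ / 2 * ‖u - v‖ ^ 2 := by
      intro i
      have h1 := aux_smooth_upper hderiv hμ hlip (⟪x i, v⟫) (⟪x i, u⟫)
      have h2 : (⟪x i, u⟫ - ⟪x i, v⟫) ^ 2 ≤ ‖u - v‖ ^ 2 := by
        have h3 : ⟪x i, u⟫ - ⟪x i, v⟫ = ⟪x i, u - v⟫ := (inner_sub_right _ _ _).symm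
        rw [h3]
        have h4 := abs_real_inner_le_norm (x i) (u - v)
        have h5 := hx i
        have h6 : |⟪x i, u - v⟫| ≤ ‖u - v‖ := by
          calc |⟪x i, u - v⟫| ≤ ‖x i‖ * ‖u - v‖ := h4
          _ ≤ 1 * ‖u - v‖ := mul_le_mul_of_nonneg_right h5 (norm_nonneg _)
          _ = ‖u - v‖ := one_mul _
        calc ⟪x i, u - v⟫ ^ 2 = |⟪x i, u - v⟫| ^ 2 := (sq_abs _).symm
        _ ≤ ‖u - v‖ ^ 2 := by
            apply pow_le_pow_left₀ (abs_nonneg _) h6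
      nlinarith
    have hsum : ∑ i, ℓ ⟪x i, u⟫ ≤
        ∑ i, (ℓ ⟪x i, v⟫ + ℓ' ⟪x i, v⟫ * (⟪x i, u⟫ - ⟪x i, v⟫)) + m * (μ / 2 * ‖u - v‖ ^ 2) := by
      have := Finset.sum_le_sum (fun i (_ : i ∈ Finset.univ) => key i)
      rw [Finset.sum_add_distrib, Finset.sum_const, Finset.card_univ, Fintype.card_fin,
        nsmul_eq_mul] at this
      linarith
    have h9 := mul_le_mul_of_nonneg_left hsum (le_of_lt (by positivity : (0:ℝ) < 1 / m))
    rw [mul_add, Finset.sum_add_distrib, mul_add] at h9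
    have hcancel : (1 / (m:ℝ)) * ((m:ℝ) * (μ / 2 * ‖u - v‖ ^ 2)) = μ / 2 * ‖u - v‖ ^ 2 := by
      field_simp
    rw [hcancel] at h9
    linarith [h9]
  -- descent inequality
  have D : ∀ t, 1 ≤ t → L (w (t + 1)) + η t / 2 * ‖G (w t)‖ ^ 2 ≤ L (w t) := by
    intro t ht
    have hrec' : w (t + 1) = w t - η t • G (w t) := by rw [hrec t ht, hgradL]
    have h1 := I2 (w t) (w (t + 1))
    have hdiff : w (t + 1) - w t = -(η t • G (w t)) := by rw [hrec']; abel
    have hinner : ⟪G (w t), w (t + 1) - w t⟫ = -(η t * ‖G (w t)‖ ^ 2) := by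
      rw [hdiff, inner_neg_right, real_inner_smul_right, real_inner_self_eq_norm_sq]
    have hnorm : ‖w (t + 1) - w t‖ ^ 2 = η t ^ 2 * ‖G (w t)‖ ^ 2 := by
      rw [hdiff, norm_neg, norm_smul, mul_pow, Real.norm_eq_abs, sq_abs]
    rw [hinner, hnorm] at h1
    have hη1 := (hη t).1
    have hη2 := (hη t).2
    have hμη : μ * η t ≤ 1 := by
      rw [le_div_iff₀ hμ] at hη2
      linarith
    have hg2 : 0 ≤ η t * ‖G (w t)‖ ^ 2 := mul_nonneg hη1.le (sq_nonneg _)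
    nlinarith [h1, hμη, hg2]
  -- monotonicity of L along iterates
  have mono : ∀ t, 1 ≤ t → ∀ s, t ≤ s → L (w s) ≤ L (w t) := by
    intro t ht s hs
    induction s, hs using Nat.le_induction with
    | base => exact le_refl _
    | succ n hn ih =>
      have h1 : 1 ≤ n := le_trans ht hn
      have h2 := D n h1
      have h3 : 0 ≤ η n / 2 * ‖G (w n)‖ ^ 2 :=
        mul_nonneg (by linarith [(hη n).1]) (sq_nonneg _)
      linarith
  -- contraction towards ws
  have key : ∀ t, 1 ≤ t → t + 1 ≤ T → ‖w (t + 1) - ws‖ ^ 2 ≤ ‖w t - ws‖ ^ 2 := by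
    intro t ht htT
    have hrec' : w (t + 1) = w t - η t • G (w t) := by rw [hrec t ht, hgradL]
    have hexp : ‖w (t + 1) - ws‖ ^ 2 = ‖w t - ws‖ ^ 2
        - 2 * (η t * ⟪w t - ws, G (w t)⟫) + η t ^ 2 * ‖G (w t)‖ ^ 2 := by
      have h0 : w (t + 1) - ws = (w t - ws) - η t • G (w t) := by rw [hrec']; abel
      rw [h0, norm_sub_sq_real, real_inner_smul_right, norm_smul, mul_pow,
        Real.norm_eq_abs, sq_abs]
    have hI : L (w t) - L ws ≤ ⟪w t - ws, G (w t)⟫ := by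
      have := I1 (w t) ws
      have h1 : ⟪G (w t), ws - w t⟫ = -⟪w t - ws, G (w t)⟫ := by
        rw [show ws - w t = -(w t - ws) from by abel, inner_neg_right, real_inner_comm]
      rw [h1] at this
      linarith
    have hD := D t ht
    have hM : L ws ≤ L (w (t + 1)) := le_trans hws (mono (t + 1) (by omega) T htT)
    have hc := (hη t).1
    have e1 : η t * (L (w t) - L ws) ≤ η t * ⟪w t - ws, G (w t)⟫ :=
      mul_le_mul_of_nonneg_left hI hc.le
    have e2 : η t * (η t / 2 * ‖G (w t)‖ ^ 2) ≤ η t * (L (w t) - L (w (t + 1))) :=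
      mul_le_mul_of_nonneg_left (by linarith) hc.le
    have e3 : η t * L ws ≤ η t * L (w (t + 1)) := mul_le_mul_of_nonneg_left hM hc.le
    linarith [hexp, e1, e2, e3]
  -- induction: distance to ws stays bounded
  have bound : ∀ t, 1 ≤ t → t ≤ T → ‖w t - ws‖ ≤ ‖ws‖ := by
    intro t ht
    induction t, ht using Nat.le_induction with
    | base => intro _; rw [hw1]; simp
    | succ n hn ih =>
      intro hsucc
      have hn' : n ≤ T := le_trans (Nat.le_succ n) hsucc
      have h1 := ih hn'
      have h2 := key n hn hsucc
      nlinarith [norm_nonneg (w (n + 1) - ws), norm_nonneg (w n - ws), norm_nonneg ws]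
  intro t ht htT
  have h1 := bound t ht htT
  have h2 : ‖w t‖ ≤ ‖w t - ws‖ + ‖ws‖ := by
    calc ‖w t‖ = ‖(w t - ws) + ws‖ := by rw [sub_add_cancel]
    _ ≤ ‖w t - ws‖ + ‖ws‖ := norm_add_le _ _
  linarith
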